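/- Fix p ∈ {1,…,7}, an ordered partition of {1,…,7}\{p} into an input triple (i₁,i₂,i₃) and an output triple (o₁,o₂,o₃), and an edge {a,b} ⊆ {1,…,7} with a ≠ b and p ∉ {a,b}. Then the row vector of input components of the edge vector is carried by the ansatz matrix to the row vector of output components: (e_{ab}(u_{i₁}^p), e_{ab}(u_{i₂}^p), e_{ab}(u_{i₃}^p)) · A^{(p)}[(i₁,i₂,i₃)→(o₁,o₂,o₃)] = (e_{ab}(u_{o₁}^p), e_{ab}(u_{o₂}^p), e_{ab}(u_{o₃}^p)). In other words, every edge vector restricts to a permitted coloring of every 5-simplex. -/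

import Mathlib

/-- The determinant `d_{ijk}` built from the columns `(α_i,β_i,γ_i)`, `(α_j,β_j,γ_j)`,
`(α_k,β_k,γ_k)`. -/
noncomputable def dd {F : Type*} [Field F] (al be ga : Fin 7 → F) (i j k : Fin 7) : F :=
  Matrix.det !![al i, al j, al k; be i, be j, be k; ga i, ga j, ga k]

/-- The ansatz matrix `A^{(p)}[(i₁,i₂,i₃)→(o₁,o₂,o₃)]`: its `(a,b)` entry is
`d_{j,o_b,p}·d_{k,o_b,p}/(d_{i_a,j,p}·d_{i_a,k,p})` where `{j,k}` are the two inputs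
other than `i_a` (chosen cyclically; the expression is symmetric in `j,k`). -/
noncomputable def ansatz {F : Type*} [Field F] (al be ga : Fin 7 → F) (p : Fin 7)
    (inp out : Fin 3 → Fin 7) : Matrix (Fin 3) (Fin 3) F := fun a b =>
  dd al be ga (inp (a + 1)) (out b) p * dd al be ga (inp (a + 2)) (out b) p /
    (dd al be ga (inp a) (inp (a + 1)) p * dd al be ga (inp a) (inp (a + 2)) p)

/-- The edge vector `e_{ab}` evaluated at a (5-element) subset `u ⊆ {1,…,7}`:
`d_{a,s,t}·d_{b,s,t}` if `a, b ∈ u`, where `{s,t}` is the complement of `u`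
(extracted as the sorted list of `uᶜ`), and `0` otherwise. -/
noncomputable def eVec {F : Type*} [Field F] (al be ga : Fin 7 → F) (a b : Fin 7)
    (u : Finset (Fin 7)) : F :=
  if a ∈ u ∧ b ∈ u then
    dd al be ga a ((uᶜ.sort (· ≤ ·)).getD 0 a) ((uᶜ.sort (· ≤ ·)).getD 1 a) *
      dd al be ga b ((uᶜ.sort (· ≤ ·)).getD 0 a) ((uᶜ.sort (· ≤ ·)).getD 1 a)
  else 0

/-- `u_q^p := {1,…,7} \ {p,q}`. -/
def uComp (p q : Fin 7) : Finset (Fin 7) := ({p, q} : Finset (Fin 7))ᶜ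

lemma dd_expand {F : Type*} [Field F] (al be ga : Fin 7 → F) (i j k : Fin 7) :
    dd al be ga i j k = al i * (be j * ga k) - al i * (be k * ga j)
      - al j * (be i * ga k) + al j * (be k * ga i)
      + al k * (be i * ga j) - al k * (be j * ga i) := by
  simp [dd, Matrix.det_fin_three]; ring

lemma dd_swap12 {F : Type*} [Field F] (al be ga : Fin 7 → F) (i j k : Fin 7) :
    dd al be ga j i k = - dd al be ga i j k := by
  simp only [dd_expand]; ring

/-- The two-row Plücker (Grassmann–Plücker) relation for the determinants `dd · · p`. -/
lemma pluck {F : Type*} [Field F] (al be ga : Fin 7 → F) (p u v s t : Fin 7) :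
    dd al be ga u v p * dd al be ga s t p - dd al be ga u s p * dd al be ga v t p
      + dd al be ga u t p * dd al be ga v s p = 0 := by
  simp only [dd_expand]; ring

/-- The cleared-denominator form of the permitted-coloring identity, proved from
eight instances of the Plücker relation. -/
lemma key {F : Type*} [Field F] (al be ga : Fin 7 → F) (p x y z w a b : Fin 7) :
    dd al be ga x a p * dd al be ga x b p *
        (dd al be ga y w p * dd al be ga z w p * dd al be ga y z p)
      - dd al be ga y a p * dd al be ga y b p *
        (dd al be ga x w p * dd al be ga z w p * dd al be ga x z p)
      + dd al be ga z a p * dd al be ga z b p *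
        (dd al be ga x w p * dd al be ga y w p * dd al be ga x y p)
      - dd al be ga w a p * dd al be ga w b p *
        (dd al be ga x y p * dd al be ga x z p * dd al be ga y z p) = 0 := by
  linear_combination
    ((dd al be ga x z p * dd al be ga y b p * dd al be ga z w p)) * pluck al be ga p x y w a
    - (dd al be ga x y p * dd al be ga y w p * dd al be ga z b p) * pluck al be ga p x z w a
    + (dd al be ga w a p * dd al be ga x y p * dd al be ga z w p) * pluck al be ga p x y z b
    + (dd al be ga x z p * dd al be ga y w p * dd al be ga z w p) * pluck al be ga p x y a b
    - (dd al be ga w a p * dd al be ga x y p * dd al be ga z b p) * pluck al be ga p x y z w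
    - (dd al be ga x y p * dd al be ga y w p * dd al be ga z w p) * pluck al be ga p x z a b
    + (dd al be ga x b p * dd al be ga y w p * dd al be ga z w p) * pluck al be ga p x y z a
    - (dd al be ga w a p * dd al be ga x y p * dd al be ga y z p) * pluck al be ga p x z w b

lemma sort_pair {p q : Fin 7} (h : p < q) :
    (({p, q} : Finset (Fin 7)).sort (· ≤ ·)) = [p, q] := by
  rw [Finset.sort_insert]
  · rw [Finset.sort_singleton]
  · intro c hc
    simp only [Finset.mem_singleton] at hc
    exact hc ▸ h.le
  · simp only [Finset.mem_singleton]
    exact h.ne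

/-- `eVec` at `u_q^p` equals `dd q a p * dd q b p` (also when `q ∈ {a,b}`, where both
sides vanish). -/
lemma eVec_eq {F : Type*} [Field F] (al be ga : Fin 7 → F) (a b p q : Fin 7)
    (hap : a ≠ p) (hbp : b ≠ p) (hqp : q ≠ p) :
    eVec al be ga a b (uComp p q) = dd al be ga q a p * dd al be ga q b p := by
  have hc : (uComp p q)ᶜ = ({p, q} : Finset (Fin 7)) := compl_compl _
  have hmem : ∀ r : Fin 7, r ∈ uComp p q ↔ ¬(r = p ∨ r = q) := by
    intro r
    simp [uComp, Finset.mem_compl]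
  by_cases haq : a = q
  · rw [eVec, if_neg]
    · subst haq
      simp only [dd_expand]; ring
    · rw [hmem a]
      push_neg
      intro h; exact absurd haq (by tauto)
  · by_cases hbq : b = q
    · rw [eVec, if_neg]
      · subst hbq
        simp only [dd_expand]; ring
      · rw [hmem b]; tauto
    · rw [eVec, if_pos ⟨(hmem a).2 (by tauto), (hmem b).2 (by tauto)⟩, hc]
      rcases lt_trichotomy p q with h | h | h
      · rw [sort_pair h]
        simp only [List.getD_cons_zero, List.getD_cons_succ]
        simp only [dd_expand]; ring
      · exact absurd h.symm hqp
      · rw [Finset.pair_comm, sort_pair h]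
        simp only [List.getD_cons_zero, List.getD_cons_succ]
        simp only [dd_expand]; ring

lemma combine {F : Type*} [Field F] (A B C ex ey ez ew d01 d02 d12 : F)
    (h01 : d01 ≠ 0) (h02 : d02 ≠ 0) (h12 : d12 ≠ 0)
    (h : ex * A * d12 - ey * B * d02 + ez * C * d01 - ew * (d01 * d02 * d12) = 0) :
    ex * (A / (d01 * d02)) + ey * (B / (d12 * -d01)) + ez * (C / (-d02 * -d12)) = ew := by
  field_simp
  linear_combination h

/-- Every edge vector restricts to a permitted coloring of every 5-simplex: the row of
its input components is carried by the ansatz matrix to the row of its output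
components. Here `(inp 0, inp 1, inp 2, out 0, out 1, out 2)` is an ordered partition
of `{1,…,7} \ {p}`. -/
theorem edgeVector_permitted_on_simplex {F : Type*} [Field F] (al be ga : Fin 7 → F)
    (hgen : ∀ i j k : Fin 7, i ≠ j → i ≠ k → j ≠ k → dd al be ga i j k ≠ 0)
    (p : Fin 7) (inp out : Fin 3 → Fin 7)
    (hpart : ({p, inp 0, inp 1, inp 2, out 0, out 1, out 2} : Finset (Fin 7)) =
      Finset.univ)
    (a b : Fin 7) (hab : a ≠ b) (hap : a ≠ p) (hbp : b ≠ p) :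
    Matrix.vecMul (fun n : Fin 3 => eVec al be ga a b (uComp p (inp n)))
        (ansatz al be ga p inp out) =
      fun n : Fin 3 => eVec al be ga a b (uComp p (out n)) := by
  set f : Fin 7 → Fin 7 := ![p, inp 0, inp 1, inp 2, out 0, out 1, out 2] with hf
  have hsurj : Function.Surjective f := by
    intro y
    have hy : y ∈ ({p, inp 0, inp 1, inp 2, out 0, out 1, out 2} : Finset (Fin 7)) :=
      hpart ▸ Finset.mem_univ y
    simp only [Finset.mem_insert, Finset.mem_singleton] at hy
    rcases hy with h | h | h | h | h | h | h
    · exact ⟨0, h.symm⟩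
    · exact ⟨1, h.symm⟩
    · exact ⟨2, h.symm⟩
    · exact ⟨3, h.symm⟩
    · exact ⟨4, h.symm⟩
    · exact ⟨5, h.symm⟩
    · exact ⟨6, h.symm⟩
  have hinj : Function.Injective f := Finite.injective_iff_surjective.mpr hsurj
  have hne : ∀ m n : Fin 7, m ≠ n → f m ≠ f n := fun m n h e => h (hinj e)
  have hi0p : inp 0 ≠ p := hne 1 0 (by decide)
  have hi1p : inp 1 ≠ p := hne 2 0 (by decide)
  have hi2p : inp 2 ≠ p := hne 3 0 (by decide)
  have hi01 : inp 0 ≠ inp 1 := hne 1 2 (by decide)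
  have hi02 : inp 0 ≠ inp 2 := hne 1 3 (by decide)
  have hi12 : inp 1 ≠ inp 2 := hne 2 3 (by decide)
  have honp : ∀ n : Fin 3, out n ≠ p := by
    intro n
    fin_cases n
    · exact hne 4 0 (by decide)
    · exact hne 5 0 (by decide)
    · exact hne 6 0 (by decide)
  funext n
  simp only [Matrix.vecMul, dotProduct, Fin.sum_univ_three, ansatz, Fin.isValue]
  norm_num
  rw [show ((1 + 1 : Fin 3)) = 2 from rfl, show ((1 + 2 : Fin 3)) = 0 from rfl,
    show ((2 + 1 : Fin 3)) = 0 from rfl, show ((2 + 2 : Fin 3)) = 1 from rfl]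
  rw [eVec_eq al be ga a b p (inp 0) hap hbp hi0p,
    eVec_eq al be ga a b p (inp 1) hap hbp hi1p,
    eVec_eq al be ga a b p (inp 2) hap hbp hi2p,
    eVec_eq al be ga a b p (out n) hap hbp (honp n),
    dd_swap12 al be ga (inp 0) (inp 1) p,  -- rewrites dd (inp 1) (inp 0) p
    dd_swap12 al be ga (inp 0) (inp 2) p,
    dd_swap12 al be ga (inp 1) (inp 2) p]
  exact combine _ _ _ _ _ _ _ _ _ _
    (hgen _ _ _ hi01 hi0p hi1p) (hgen _ _ _ hi02 hi0p hi2p) (hgen _ _ _ hi12 hi1p hi2p)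
    (by linear_combination key al be ga p (inp 0) (inp 1) (inp 2) (out n) a b)
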